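/- Let f₀, G, Q, β be real numbers with G > 0, Q > 0, β < 0 and Q + Gβ > 0, define φ : ℝ → ℝ by φ(α) = f₀ − αG/(1 − αβ) + (α²/2)·Q/(1 − αβ)², and set α^S = G/(Q + Gβ). Then α^S > 0, φ′(α) < 0 for all α ∈ [0, α^S), φ′(α) > 0 for all α > α^S, and α^S is the strict global minimizer of φ over (0, ∞): φ(α) > φ(α^S) for every α > 0 with α ≠ α^S. -/

import Mathlib

theorem conic_model_min_negative_singular_point (f₀ G Q β : ℝ)
    (hG : G > 0) (hQ : Q > 0) (hβ : β < 0) (hQGβ : Q + G * β > 0)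
    (φ : ℝ → ℝ)
    (hφ : ∀ α : ℝ, φ α = f₀ - α * G / (1 - α * β) + α ^ 2 / 2 * Q / (1 - α * β) ^ 2)
    (αS : ℝ) (hαS : αS = G / (Q + G * β)) :
    αS > 0 ∧
    (∀ α ∈ Set.Ico (0 : ℝ) αS, deriv φ α < 0) ∧
    (∀ α : ℝ, α > αS → deriv φ α > 0) ∧
    (∀ α : ℝ, α > 0 → α ≠ αS → φ α > φ αS) := by
  have hφfun : φ = fun α : ℝ => f₀ - α * G / (1 - α * β) + α ^ 2 / 2 * Q / (1 - α * β) ^ 2 :=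
    funext hφ
  -- positivity of denominator for α ≥ 0
  have hden : ∀ α : ℝ, 0 ≤ α → (0:ℝ) < 1 - α * β := by
    intro α hα
    nlinarith
  -- derivative
  have hderiv : ∀ α : ℝ, 1 - α * β ≠ 0 →
      HasDerivAt φ ((α * (Q + G * β) - G) / (1 - α * β) ^ 3) α := by
    intro α h
    rw [hφfun]
    have h1 : HasDerivAt (fun x : ℝ => 1 - x * β) (-β) α := by
      simpa using ((hasDerivAt_id α).mul_const β).const_sub 1
    have h2 : HasDerivAt (fun x : ℝ => x * G) G α := by
      simpa using (hasDerivAt_id α).mul_const G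
    have h3 : HasDerivAt (fun x : ℝ => x ^ 2 / 2 * Q) (α * Q) α := by
      have := ((hasDerivAt_pow 2 α).div_const 2).mul_const Q
      simpa using this.congr_deriv (by ring)
    have h4 : HasDerivAt (fun x : ℝ => (1 - x * β) ^ 2) (2 * (1 - α * β) * (-β)) α := by
      simpa using (h1.fun_pow 2).congr_deriv (by ring)
    have hd1 : HasDerivAt (fun x : ℝ => x * G / (1 - x * β))
        ((G * (1 - α * β) - α * G * (-β)) / (1 - α * β) ^ 2) α := h2.div h1 h
    have h2ne : (1 - α * β) ^ 2 ≠ 0 := pow_ne_zero 2 h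
    have hd2 : HasDerivAt (fun x : ℝ => x ^ 2 / 2 * Q / (1 - x * β) ^ 2)
        ((α * Q * (1 - α * β) ^ 2 - α ^ 2 / 2 * Q * (2 * (1 - α * β) * (-β))) /
          ((1 - α * β) ^ 2) ^ 2) α := h3.div h4 h2ne
    have := (hd1.const_sub f₀).add hd2
    refine this.congr_deriv ?_
    field_simp
    ring
  have hαSpos : αS > 0 := by rw [hαS]; positivity
  have hdenS : (0:ℝ) < 1 - αS * β := hden αS hαSpos.le
  refine ⟨hαSpos, ?_, ?_, ?_⟩
  · intro α hα
    obtain ⟨hα0, hαlt⟩ := hα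
    have hd := hden α hα0
    rw [(hderiv α hd.ne').deriv]
    apply div_neg_of_neg_of_pos
    · have : α * (Q + G * β) < αS * (Q + G * β) := by
        exact mul_lt_mul_of_pos_right hαlt hQGβ
      rw [hαS] at this
      rw [div_mul_cancel₀] at this
      · linarith
      · exact hQGβ.ne'
    · positivity
  · intro α hα
    have hα0 : 0 ≤ α := le_of_lt (lt_trans hαSpos hα)
    have hd := hden α hα0
    rw [(hderiv α hd.ne').deriv]
    apply div_pos
    · have : αS * (Q + G * β) < α * (Q + G * β) := mul_lt_mul_of_pos_right hα hQGβ
      rw [hαS, div_mul_cancel₀ _ hQGβ.ne'] at this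
      linarith
    · positivity
  · -- global min
    have hdiff : ∀ α : ℝ, 0 ≤ α → DifferentiableAt ℝ φ α := fun α hα =>
      (hderiv α (hden α hα).ne').differentiableAt
    have hanti : StrictAntiOn φ (Set.Icc 0 αS) := by
      apply strictAntiOn_of_deriv_neg (convex_Icc 0 αS)
      · exact fun α hα => (hdiff α hα.1).continuousAt.continuousWithinAt
      · intro α hα
        rw [interior_Icc] at hα
        have hd := hden α hα.1.le
        rw [(hderiv α hd.ne').deriv]
        apply div_neg_of_neg_of_pos
        · have : α * (Q + G * β) < αS * (Q + G * β) := mul_lt_mul_of_pos_right hα.2 hQGβ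
          rw [hαS, div_mul_cancel₀ _ hQGβ.ne'] at this
          linarith
        · positivity
    have hmono : StrictMonoOn φ (Set.Ici αS) := by
      apply strictMonoOn_of_deriv_pos (convex_Ici αS)
      · exact fun α hα => (hdiff α (le_trans hαSpos.le hα)).continuousAt.continuousWithinAt
      · intro α hα
        rw [interior_Ici] at hα
        have hd := hden α (le_of_lt (lt_trans hαSpos hα))
        rw [(hderiv α hd.ne').deriv]
        apply div_pos
        · have : αS * (Q + G * β) < α * (Q + G * β) := mul_lt_mul_of_pos_right hα hQGβ
          rw [hαS, div_mul_cancel₀ _ hQGβ.ne'] at this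
          linarith
        · positivity
    intro α hα hne
    rcases lt_or_gt_of_ne hne with h | h
    · exact hanti ⟨hα.le, h.le⟩ ⟨hαSpos.le, le_refl αS⟩ h
    · exact hmono (le_refl αS) h.le h
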